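/- In ℝ^{p,q} with n = p+q, the function J(x) = sgn(Q(x)) · x / |Q(x)|^{n/2} is left monogenic on the open set {x : Q(x) ≠ 0}: applying the Dirac operator D = Σ_{j≤p} e_j ∂/∂x_j - Σ_{j>p} e_j ∂/∂x_j gives D J = 0. (Here x = Σ x_j e_j ∈ V ⊂ Cl(ℝ^{p,q}) and x² = -Q(x).) -/

import Mathlib

open CliffordAlgebra

/-- The quadratic form of `ℝ^{p,q}`: `Q x = x₁²+⋯+x_p² - x_{p+1}²-⋯-x_{p+q}²`. -/
noncomputable def Qpq (p q : ℕ) : QuadraticForm ℝ (Fin (p + q) → ℝ) :=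
  QuadraticMap.weightedSumSquares ℝ (fun i : Fin (p + q) => if (i : ℕ) < p then (1 : ℝ) else -1)

/-- in `ℝ^{p,q}` (with `n = p+q`), the function
`J(x) = sgn(Q x) · x / |Q x|^{n/2}` (valued in `V ⊂ Cl(ℝ^{p,q})`, convention
`v² = -Q v`) is left monogenic on `{x : Q x ≠ 0}`: applying the Dirac operator
`D = Σ_{j≤p} e_j ∂/∂x_j - Σ_{j>p} e_j ∂/∂x_j` gives `D J = 0`.
(The Clifford algebra is transported along an algebra isomorphism `φ` to a real
normed algebra `A` so that derivatives of `Cl`-valued functions make sense.) -/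
theorem inversion_kernel_left_monogenic (p q : ℕ)
    (A : Type*) [NormedRing A] [NormedAlgebra ℝ A]
    (φ : CliffordAlgebra (-(Qpq p q)) ≃ₐ[ℝ] A)
    (J : (Fin (p + q) → ℝ) → A)
    (hJ : ∀ y, J y = (Real.sign (Qpq p q y) / |Qpq p q y| ^ (((p + q : ℕ) : ℝ) / 2)) •
      φ (ι (-(Qpq p q)) y))
    (x : Fin (p + q) → ℝ) (hx : Qpq p q x ≠ 0) :
    ∑ j : Fin (p + q), (if (j : ℕ) < p then (1 : ℝ) else -1) •
      (φ (ι (-(Qpq p q)) (Pi.single j 1)) * fderiv ℝ J x (Pi.single j 1)) = 0 := by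
  classical
  set r : ℝ := (((p + q : ℕ) : ℝ) / 2) with hr
  -- the linear embedding of V into A, as a continuous linear map
  let ψ : (Fin (p + q) → ℝ) →L[ℝ] A :=
    LinearMap.toContinuousLinearMap (φ.toLinearMap ∘ₗ ι (-(Qpq p q)))
  have hψ : ∀ y, φ (ι (-(Qpq p q)) y) = ψ y := fun y => by simp [ψ]
  have hsq : ∀ v, ψ v * ψ v = (-(Qpq p q v)) • (1 : A) := fun v => by
    rw [← hψ v, ← map_mul φ, ι_sq_scalar, QuadraticMap.neg_apply,
      AlgEquiv.commutes, Algebra.algebraMap_eq_smul_one]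
  have hQe : ∀ j : Fin (p + q), Qpq p q (Pi.single j 1) =
      (if (j : ℕ) < p then (1 : ℝ) else -1) := fun j => by
    simp [Qpq, QuadraticMap.weightedSumSquares_apply, Pi.single_apply]
  have hQfun : (fun y : Fin (p + q) → ℝ => Qpq p q y)
      = fun y => ∑ i : Fin (p + q), (if (i : ℕ) < p then (1 : ℝ) else -1) * (y i * y i) := by
    funext y
    simp [Qpq, QuadraticMap.weightedSumSquares_apply, smul_eq_mul]
  -- sign bookkeeping
  set s : ℝ := Real.sign (Qpq p q x) with hs
  have hs1 : s = 1 ∨ s = -1 := by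
    rcases lt_or_gt_of_ne hx with h | h
    · exact Or.inr (by rw [hs, Real.sign_of_neg h])
    · exact Or.inl (by rw [hs, Real.sign_of_pos h])
  have hss : s * s = 1 := by rcases hs1 with h | h <;> rw [h] <;> norm_num
  set b : ℝ := |Qpq p q x| with hb
  have hb0 : 0 < b := abs_pos.mpr hx
  have hbx : s * Qpq p q x = b := by
    rcases lt_or_gt_of_ne hx with h | h
    · rw [hs, hb, Real.sign_of_neg h, abs_of_neg h]; ring
    · rw [hs, hb, Real.sign_of_pos h, abs_of_pos h]; ring
  have hQx : Qpq p q x = s * b := by linear_combination s * hbx - Qpq p q x * hss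
  -- derivative of Q
  set Lq : (Fin (p + q) → ℝ) →L[ℝ] ℝ :=
    ∑ i : Fin (p + q), (if (i : ℕ) < p then (1 : ℝ) else -1) •
      (x i • ContinuousLinearMap.proj i + x i • ContinuousLinearMap.proj i) with hLq
  have hQder : HasFDerivAt (fun y => Qpq p q y) Lq x := by
    rw [hQfun, hLq]
    refine HasFDerivAt.fun_sum fun i _ => ?_
    have hp := hasFDerivAt_apply (𝕜 := ℝ) (F' := fun _ : Fin (p + q) => ℝ) i x
    exact (hp.mul hp).const_mul _
  have hLqe : ∀ j, Lq (Pi.single j 1) =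
      (if (j : ℕ) < p then (1 : ℝ) else -1) * (2 * x j) := fun j => by
    rw [hLq]
    simp only [ContinuousLinearMap.sum_apply, ContinuousLinearMap.smul_apply,
      ContinuousLinearMap.add_apply, ContinuousLinearMap.proj_apply, Pi.single_apply,
      smul_eq_mul]
    rw [Finset.sum_eq_single j (fun i _ hij => by simp [hij]) (by simp)]
    simp; ring
  -- derivative of the scalar factor
  have hsQ : HasFDerivAt (fun y => s * Qpq p q y) (s • Lq) x := hQder.const_mul s
  have hrpow : HasDerivAt (fun t : ℝ => t ^ (-r)) ((-r) * b ^ (-r - 1)) (s * Qpq p q x) := by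
    rw [hbx]; exact Real.hasDerivAt_rpow_const (Or.inl hb0.ne')
  have hu : HasFDerivAt (fun y => (s * Qpq p q y) ^ (-r))
      (((-r) * b ^ (-r - 1)) • (s • Lq)) x := by have := hrpow.comp_hasFDerivAt x hsQ; exact this
  have hg : HasFDerivAt (fun y => s * (s * Qpq p q y) ^ (-r))
      (s • (((-r) * b ^ (-r - 1)) • (s • Lq))) x := hu.const_mul s
  have hf : HasFDerivAt (fun y => (s * (s * Qpq p q y) ^ (-r)) • ψ y)
      ((s * b ^ (-r)) • (ψ : (Fin (p + q) → ℝ) →L[ℝ] A)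
        + (s • (((-r) * b ^ (-r - 1)) • (s • Lq))).smulRight (ψ x)) x := by
    have := hg.smul ψ.hasFDerivAt
    rwa [hbx] at this
  -- J agrees with this function near x
  have hQapp : ∀ y : Fin (p + q) → ℝ, Qpq p q y
      = ∑ i : Fin (p + q), (if (i : ℕ) < p then (1 : ℝ) else -1) * (y i * y i) :=
    fun y => congrFun hQfun y
  have hcont : Continuous (fun y => s * Qpq p q y) := by
    simp only [hQapp]
    exact continuous_const.mul (continuous_finset_sum _ fun i _ =>
      continuous_const.mul ((continuous_apply i).mul (continuous_apply i)))
  have hopen : IsOpen {y : Fin (p + q) → ℝ | 0 < s * Qpq p q y} :=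
    isOpen_lt continuous_const hcont
  have hmem : x ∈ {y : Fin (p + q) → ℝ | 0 < s * Qpq p q y} := by
    show 0 < s * Qpq p q x
    rw [hbx]; exact hb0
  have hev : J =ᶠ[nhds x] fun y => (s * (s * Qpq p q y) ^ (-r)) • ψ y := by
    filter_upwards [hopen.mem_nhds hmem] with y hy
    have hy' : 0 < s * Qpq p q y := hy
    have hsgn : Real.sign (Qpq p q y) = s := by
      rcases hs1 with h | h
      · rw [h] at hy' ⊢
        exact Real.sign_of_pos (by linarith)
      · rw [h] at hy' ⊢
        exact Real.sign_of_neg (by linarith)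
    have habs : |Qpq p q y| = s * Qpq p q y := by
      rcases hs1 with h | h
      · rw [h] at hy' ⊢
        rw [abs_of_pos (by linarith)]; ring
      · rw [h] at hy' ⊢
        rw [abs_of_neg (by linarith)]; ring
    rw [hJ y, hψ y, hsgn, habs, Real.rpow_neg hy'.le, div_eq_mul_inv]
  have hfd : fderiv ℝ J x
      = (s * b ^ (-r)) • (ψ : (Fin (p + q) → ℝ) →L[ℝ] A)
        + (s • (((-r) * b ^ (-r - 1)) • (s • Lq))).smulRight (ψ x) := by
    rw [hev.fderiv_eq, hf.fderiv]
  rw [hfd]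
  -- evaluate each term of the Dirac sum
  have hcj2 : ∀ j : Fin (p + q),
      (if (j : ℕ) < p then (1 : ℝ) else -1) * (if (j : ℕ) < p then (1 : ℝ) else -1) = 1 :=
    fun j => by by_cases h : (j : ℕ) < p <;> simp [h]
  have key : ∀ j : Fin (p + q), (if (j : ℕ) < p then (1 : ℝ) else -1) •
      (φ (ι (-(Qpq p q)) (Pi.single j 1)) *
        (((s * b ^ (-r)) • (ψ : (Fin (p + q) → ℝ) →L[ℝ] A)
          + (s • (((-r) * b ^ (-r - 1)) • (s • Lq))).smulRight (ψ x)) (Pi.single j 1)))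
      = (-(s * b ^ (-r))) • (1 : A)
        + ((-2 * r * b ^ (-r - 1)) * x j) • (ψ (Pi.single j 1) * ψ x) := by
    intro j
    simp only [ContinuousLinearMap.add_apply, ContinuousLinearMap.smul_apply,
      ContinuousLinearMap.smulRight_apply, smul_eq_mul]
    rw [hψ, hLqe j, mul_add, mul_smul_comm, mul_smul_comm, hsq, hQe]
    rcases hs1 with hsv | hsv <;> by_cases hj : (j : ℕ) < p <;>
      simp only [hsv, hj, if_true, if_false] <;> module
  simp only [key]
  -- sum the two pieces
  have hpsix : ∑ j : Fin (p + q), x j • ψ (Pi.single j 1) = ψ x := by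
    have h1 : ∀ j : Fin (p + q), x j • ψ (Pi.single j 1) = ψ (Pi.single j (x j)) := by
      intro j
      rw [← map_smul]
      congr 1
      ext i
      simp [Pi.single_apply]
    rw [Finset.sum_congr rfl fun j _ => h1 j, ← map_sum, Finset.univ_sum_single]
  have h2 : ∑ j : Fin (p + q), ((-2 * r * b ^ (-r - 1)) * x j) • (ψ (Pi.single j 1) * ψ x)
      = (-2 * r * b ^ (-r - 1)) • (ψ x * ψ x) := by
    have h3 : ∀ j : Fin (p + q), ((-2 * r * b ^ (-r - 1)) * x j) • (ψ (Pi.single j 1) * ψ x)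
        = (-2 * r * b ^ (-r - 1)) • ((x j • ψ (Pi.single j 1)) * ψ x) := by
      intro j
      rw [smul_mul_assoc, smul_smul]
    rw [Finset.sum_congr rfl fun j _ => h3 j, ← Finset.smul_sum, ← Finset.sum_mul, hpsix]
  rw [Finset.sum_add_distrib, h2, hsq x, Finset.sum_const, Finset.card_univ,
    Fintype.card_fin, ← Nat.cast_smul_eq_nsmul ℝ, smul_smul, smul_smul, ← add_smul]
  have hBb : b ^ (-r - 1) * b = b ^ (-r) := by
    have h4 := Real.rpow_add_one hb0.ne' (-r - 1)
    rw [← h4]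
    congr 1
    ring
  have h2r : 2 * r = ((p + q : ℕ) : ℝ) := by rw [hr]; ring
  have hscal : ((p + q : ℕ) : ℝ) * (-(s * b ^ (-r)))
      + (-2 * r * b ^ (-r - 1)) * (-(Qpq p q x)) = 0 := by
    rw [hQx]
    linear_combination (s * b ^ (-r)) * h2r + (2 * r * s) * hBb
  rw [hscal, zero_smul]
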